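/- arXiv:2203.12422 — 10 statements merged into one kernel-verified Lean document; each statement's English description precedes it below -/
import Mathlib

section
/- The four acoustic pairs are eigenpairs of the Jacobian: A · R₁₊ = (u₁ + a₁) R₁₊, A · R₁₋ = (u₁ − a₁) R₁₋, A · R₂₊ = (u₂ + a₂) R₂₊ and A · R₂₋ = (u₂ − a₂) R₂₋. -/
/-- The four acoustic pairs are eigenpairs of the Jacobian of the 1D barotropic
SHTC two-phase flow system in primitive variables. -/
theorem acoustic_eigenpairs
    (α₁ ρ₁ ρ₂ u₁ u₂ p₁ p₂ a₁ a₂ : ℝ)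
    (hα₁ : 0 < α₁) (hα₁' : α₁ < 1) (hρ₁ : 0 < ρ₁) (hρ₂ : 0 < ρ₂)
    (ha₁ : 0 < a₁) (ha₂ : 0 < a₂)
    (α₂ ρ c₁ c₂ u : ℝ)
    (hα₂ : α₂ = 1 - α₁) (hρ : ρ = α₁ * ρ₁ + α₂ * ρ₂)
    (hc₁ : c₁ = α₁ * ρ₁ / ρ) (hc₂ : c₂ = α₂ * ρ₂ / ρ)
    (hu : u = c₁ * u₁ + c₂ * u₂)
    (A : Matrix (Fin 5) (Fin 5) ℝ)
    (hA : A = !![u, 0, 0, 0, 0;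
                 ρ₁ / α₁ * (u₁ - u), u₁, 0, ρ₁, 0;
                 ρ₂ / α₂ * (u - u₂), 0, u₂, 0, ρ₂;
                 (p₁ - p₂) / ρ, a₁ ^ 2 / ρ₁, 0, u₁, 0;
                 (p₁ - p₂) / ρ, 0, a₂ ^ 2 / ρ₂, 0, u₂]) :
    A.mulVec ![0, 1, 0, a₁ / ρ₁, 0] = (u₁ + a₁) • ![0, 1, 0, a₁ / ρ₁, 0] ∧
    A.mulVec ![0, 1, 0, -(a₁ / ρ₁), 0] = (u₁ - a₁) • ![0, 1, 0, -(a₁ / ρ₁), 0] ∧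
    A.mulVec ![0, 0, 1, 0, a₂ / ρ₂] = (u₂ + a₂) • ![0, 0, 1, 0, a₂ / ρ₂] ∧
    A.mulVec ![0, 0, 1, 0, -(a₂ / ρ₂)] = (u₂ - a₂) • ![0, 0, 1, 0, -(a₂ / ρ₂)] := by
  subst hA
  have h1 := hρ₁.ne'
  have h2 := hρ₂.ne'
  refine ⟨?_, ?_, ?_, ?_⟩ <;>
  · funext i
    fin_cases i <;>
      simp [Matrix.mulVec, dotProduct, Fin.sum_univ_five] <;>
      field_simp <;> ring
end

section
/- The contact pair is an eigenpair of the Jacobian: A · R_C = u · R_C, where u = c₁u₁ + c₂u₂ is the mixture velocity. -/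
set_option maxHeartbeats 2000000 in
/-- The contact pair is an eigenpair of the Jacobian of the 1D barotropic
SHTC two-phase flow system: A · R_C = u · R_C where u is the mixture velocity. -/
theorem contact_eigenpair
    (α₁ ρ₁ ρ₂ u₁ u₂ p₁ p₂ a₁ a₂ : ℝ)
    (hα₁ : 0 < α₁) (hα₁' : α₁ < 1) (hρ₁ : 0 < ρ₁) (hρ₂ : 0 < ρ₂)
    (ha₁ : 0 < a₁) (ha₂ : 0 < a₂)
    (α₂ ρ c₁ c₂ u : ℝ)
    (hα₂ : α₂ = 1 - α₁) (hρ : ρ = α₁ * ρ₁ + α₂ * ρ₂)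
    (hc₁ : c₁ = α₁ * ρ₁ / ρ) (hc₂ : c₂ = α₂ * ρ₂ / ρ)
    (hu : u = c₁ * u₁ + c₂ * u₂)
    (δ₁ δ₂ ε₁ ε₂ γ₁ γ₂ : ℝ)
    (hδ₁ : δ₁ = (p₁ - p₂) / ρ - (u - u₁) ^ 2 / α₁)
    (hδ₂ : δ₂ = (p₁ - p₂) / ρ + (u - u₂) ^ 2 / α₂)
    (hε₁ : ε₁ = ((u - u₁) ^ 2 - a₁ ^ 2) / ρ₁)
    (hε₂ : ε₂ = ((u - u₂) ^ 2 - a₂ ^ 2) / ρ₂)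
    (hγ₁ : γ₁ = (α₁ * (p₁ - p₂) - ρ * a₁ ^ 2) / (α₁ * ρ₁ * ρ))
    (hγ₂ : γ₂ = -((α₂ * (p₁ - p₂) + ρ * a₂ ^ 2) / (α₂ * ρ₂ * ρ)))
    (A : Matrix (Fin 5) (Fin 5) ℝ)
    (hA : A = !![u, 0, 0, 0, 0;
                 ρ₁ / α₁ * (u₁ - u), u₁, 0, ρ₁, 0;
                 ρ₂ / α₂ * (u - u₂), 0, u₂, 0, ρ₂;
                 (p₁ - p₂) / ρ, a₁ ^ 2 / ρ₁, 0, u₁, 0;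
                 (p₁ - p₂) / ρ, 0, a₂ ^ 2 / ρ₂, 0, u₂]) :
    A.mulVec ![ε₁ * ε₂, δ₁ * ε₂, δ₂ * ε₁, (u - u₁) * ε₂ * γ₁, -((u - u₂) * ε₁ * γ₂)]
      = u • ![ε₁ * ε₂, δ₁ * ε₂, δ₂ * ε₁, (u - u₁) * ε₂ * γ₁, -((u - u₂) * ε₁ * γ₂)] := by

  have hρpos : 0 < ρ := by rw [hρ, hα₂]; nlinarith
  have hρ0 : ρ ≠ 0 := ne_of_gt hρpos
  have h1 : α₁ ≠ 0 := ne_of_gt hα₁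
  have h2 : α₂ ≠ 0 := by rw [hα₂]; intro h; linarith
  have h3 : ρ₁ ≠ 0 := ne_of_gt hρ₁
  have h4 : ρ₂ ≠ 0 := ne_of_gt hρ₂
  subst hA hδ₁ hδ₂ hε₁ hε₂ hγ₁ hγ₂
  funext i
  fin_cases i <;>
    simp [Matrix.mulVec, dotProduct, Fin.sum_univ_five] <;>
    field_simp <;> ring
end

section
/- The contact field (λ_C, R_C) is linearly degenerate: the gradient of the eigenvalue λ_C = c₁u₁ + c₂u₂ with respect to (α₁,ρ₁,ρ₂,u₁,u₂), namely the vector ((ρ₁ρ₂/ρ²)(u₁−u₂), (α₁c₂/ρ)(u₁−u₂), (α₂c₁/ρ)(u₂−u₁), c₁, c₂), has vanishing dot product with R_C; that is, (ρ₁ρ₂/ρ²)(u₁−u₂)·ε₁ε₂ + (α₁c₂(u₁−u₂)/ρ)·δ₁ε₂ + (α₂c₁(u₂−u₁)/ρ)·δ₂ε₁ + c₁·(u−u₁)ε₂γ₁ − c₂·(u−u₂)ε₁γ₂ = 0. -/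
/-- The contact field (λ_C, R_C) of the barotropic SHTC two-phase flow system is
linearly degenerate: ∇λ_C · R_C = 0. -/
theorem contact_field_linearly_degenerate
    (α₁ ρ₁ ρ₂ u₁ u₂ p₁ p₂ a₁ a₂ : ℝ)
    (hα₁ : 0 < α₁) (hα₁' : α₁ < 1) (hρ₁ : 0 < ρ₁) (hρ₂ : 0 < ρ₂)
    (ha₁ : 0 < a₁) (ha₂ : 0 < a₂)
    (α₂ ρ c₁ c₂ u : ℝ)
    (hα₂ : α₂ = 1 - α₁) (hρ : ρ = α₁ * ρ₁ + α₂ * ρ₂)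
    (hc₁ : c₁ = α₁ * ρ₁ / ρ) (hc₂ : c₂ = α₂ * ρ₂ / ρ)
    (hu : u = c₁ * u₁ + c₂ * u₂)
    (δ₁ δ₂ ε₁ ε₂ γ₁ γ₂ : ℝ)
    (hδ₁ : δ₁ = (p₁ - p₂) / ρ - (u - u₁) ^ 2 / α₁)
    (hδ₂ : δ₂ = (p₁ - p₂) / ρ + (u - u₂) ^ 2 / α₂)
    (hε₁ : ε₁ = ((u - u₁) ^ 2 - a₁ ^ 2) / ρ₁)
    (hε₂ : ε₂ = ((u - u₂) ^ 2 - a₂ ^ 2) / ρ₂)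
    (hγ₁ : γ₁ = (α₁ * (p₁ - p₂) - ρ * a₁ ^ 2) / (α₁ * ρ₁ * ρ))
    (hγ₂ : γ₂ = -((α₂ * (p₁ - p₂) + ρ * a₂ ^ 2) / (α₂ * ρ₂ * ρ))) :
    ρ₁ * ρ₂ / ρ ^ 2 * (u₁ - u₂) * (ε₁ * ε₂)
      + α₁ * c₂ * (u₁ - u₂) / ρ * (δ₁ * ε₂)
      + α₂ * c₁ * (u₂ - u₁) / ρ * (δ₂ * ε₁)
      + c₁ * ((u - u₁) * ε₂ * γ₁)
      - c₂ * ((u - u₂) * ε₁ * γ₂) = 0 := by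
  have hα₂' : 0 < α₂ := by rw [hα₂]; linarith
  have hρ' : 0 < ρ := by rw [hρ]; positivity
  have h1 : α₁ ≠ 0 := ne_of_gt hα₁
  have h2 : α₂ ≠ 0 := ne_of_gt hα₂'
  have h3 : ρ₁ ≠ 0 := ne_of_gt hρ₁
  have h4 : ρ₂ ≠ 0 := ne_of_gt hρ₂
  have h5 : ρ ≠ 0 := ne_of_gt hρ'
  have hsum : c₁ + c₂ = 1 := by
    rw [hc₁, hc₂]
    field_simp
    linarith [hρ]
  have hu1 : u - u₁ = -(c₂ * (u₁ - u₂)) := by linear_combination hu + u₁ * hsum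
  have hu2 : u - u₂ = c₁ * (u₁ - u₂) := by linear_combination hu + u₂ * hsum
  have hε₁' : ε₁ = (c₂ ^ 2 * (u₁ - u₂) ^ 2 - a₁ ^ 2) / ρ₁ := by rw [hε₁, hu1]; ring
  have hε₂' : ε₂ = (c₁ ^ 2 * (u₁ - u₂) ^ 2 - a₂ ^ 2) / ρ₂ := by rw [hε₂, hu2]; ring
  have hA1 : ρ₁ * ρ₂ / ρ ^ 2 * (u₁ - u₂) * (ε₁ * ε₂)
      = (u₁ - u₂) * (c₂ ^ 2 * (u₁ - u₂) ^ 2 - a₁ ^ 2) * (c₁ ^ 2 * (u₁ - u₂) ^ 2 - a₂ ^ 2) / ρ ^ 2 := by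
    rw [hε₁', hε₂']
    field_simp
  have hA2 : α₁ * c₂ * (u₁ - u₂) / ρ * (δ₁ * ε₂) + c₁ * ((u - u₁) * ε₂ * γ₁)
      = -(α₂ * ((u₁ - u₂) * (c₂ ^ 2 * (u₁ - u₂) ^ 2 - a₁ ^ 2) * (c₁ ^ 2 * (u₁ - u₂) ^ 2 - a₂ ^ 2) / ρ ^ 2)) := by
    rw [hδ₁, hε₂', hγ₁, hu1, hc₁, hc₂]
    field_simp
    ring
  have hA3 : α₂ * c₁ * (u₂ - u₁) / ρ * (δ₂ * ε₁) - c₂ * ((u - u₂) * ε₁ * γ₂)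
      = -(α₁ * ((u₁ - u₂) * (c₂ ^ 2 * (u₁ - u₂) ^ 2 - a₁ ^ 2) * (c₁ ^ 2 * (u₁ - u₂) ^ 2 - a₂ ^ 2) / ρ ^ 2)) := by
    rw [hδ₂, hε₁', hγ₂, hu2, hc₁, hc₂]
    field_simp
    ring
  linear_combination hA1 + hA2 + hA3
    - ((u₁ - u₂) * (c₂ ^ 2 * (u₁ - u₂) ^ 2 - a₁ ^ 2) * (c₁ ^ 2 * (u₁ - u₂) ^ 2 - a₂ ^ 2) / ρ ^ 2) * hα₂
end

section
/- Coincidence of eigenvectors and eigenvalues: assume (u−u₂)² ≠ a₂². Then R_C lies in the linear span of R₁₊ and R₁₋ (equivalently, in the subspace of vectors of ℝ⁵ whose first, third and fifth components vanish) if and only if (u−u₁)² = a₁², i.e. if and only if the contact eigenvalue λ_C = u coincides with one of the phase-1 acoustic eigenvalues u₁ + a₁ or u₁ − a₁. -/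
/-- Coincidence of eigenvectors and eigenvalues: if (u−u₂)² ≠ a₂², then the contact
eigenvector R_C lies in the span of the phase-1 acoustic eigenvectors R₁₊, R₁₋ iff
(u−u₁)² = a₁², i.e. iff the contact eigenvalue u coincides with u₁ + a₁ or u₁ − a₁. -/
theorem contact_eigenvector_coincidence
    (α₁ ρ₁ ρ₂ u₁ u₂ p₁ p₂ a₁ a₂ : ℝ)
    (hα₁ : 0 < α₁) (hα₁' : α₁ < 1) (hρ₁ : 0 < ρ₁) (hρ₂ : 0 < ρ₂)
    (ha₁ : 0 < a₁) (ha₂ : 0 < a₂)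
    (α₂ ρ c₁ c₂ u : ℝ)
    (hα₂ : α₂ = 1 - α₁) (hρ : ρ = α₁ * ρ₁ + α₂ * ρ₂)
    (hc₁ : c₁ = α₁ * ρ₁ / ρ) (hc₂ : c₂ = α₂ * ρ₂ / ρ)
    (hu : u = c₁ * u₁ + c₂ * u₂)
    (δ₁ δ₂ ε₁ ε₂ γ₁ γ₂ : ℝ)
    (hδ₁ : δ₁ = (p₁ - p₂) / ρ - (u - u₁) ^ 2 / α₁)
    (hδ₂ : δ₂ = (p₁ - p₂) / ρ + (u - u₂) ^ 2 / α₂)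
    (hε₁ : ε₁ = ((u - u₁) ^ 2 - a₁ ^ 2) / ρ₁)
    (hε₂ : ε₂ = ((u - u₂) ^ 2 - a₂ ^ 2) / ρ₂)
    (hγ₁ : γ₁ = (α₁ * (p₁ - p₂) - ρ * a₁ ^ 2) / (α₁ * ρ₁ * ρ))
    (hγ₂ : γ₂ = -((α₂ * (p₁ - p₂) + ρ * a₂ ^ 2) / (α₂ * ρ₂ * ρ)))
    (hres : (u - u₂) ^ 2 ≠ a₂ ^ 2) :
    (![ε₁ * ε₂, δ₁ * ε₂, δ₂ * ε₁, (u - u₁) * ε₂ * γ₁, -((u - u₂) * ε₁ * γ₂)]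
        ∈ Submodule.span ℝ
          ({![0, 1, 0, a₁ / ρ₁, 0], ![0, 1, 0, -(a₁ / ρ₁), 0]} : Set (Fin 5 → ℝ))
      ↔ (u - u₁) ^ 2 = a₁ ^ 2)
    ∧ ((u - u₁) ^ 2 = a₁ ^ 2 ↔ (u = u₁ + a₁ ∨ u = u₁ - a₁)) := by
  have hε₂ne : ε₂ ≠ 0 := by
    rw [hε₂]
    intro h
    rcases div_eq_zero_iff.mp h with h | h
    · exact hres (by linarith)
    · exact absurd h (ne_of_gt hρ₂)
  constructor
  · rw [Submodule.mem_span_pair]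
    constructor
    · rintro ⟨c, d, hcd⟩
      have h0 := congrFun hcd 0
      simp [Pi.add_apply, Pi.smul_apply] at h0
      have hε₁0 : ε₁ = 0 := h0.resolve_right hε₂ne
      rw [hε₁] at hε₁0
      rcases div_eq_zero_iff.mp hε₁0 with h | h
      · linarith
      · exact absurd h (ne_of_gt hρ₁)
    · intro h
      have hε₁0 : ε₁ = 0 := by rw [hε₁, h]; simp
      refine ⟨(δ₁ * ε₂ + (u - u₁) * ε₂ * γ₁ * ρ₁ / a₁) / 2,
              (δ₁ * ε₂ - (u - u₁) * ε₂ * γ₁ * ρ₁ / a₁) / 2, ?_⟩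
      funext i
      fin_cases i <;>
        simp [hε₁0, Pi.add_apply, Pi.smul_apply] <;>
        field_simp <;> ring
  · constructor
    · intro h
      have hf : (u - u₁ - a₁) * (u - u₁ + a₁) = 0 := by nlinarith
      rcases mul_eq_zero.mp hf with h' | h'
      · left; linarith
      · right; linarith
    · rintro (h | h) <;> rw [h] <;> ring
end

section
/- Hyperbolicity away from resonance: if (u−u₁)² ≠ a₁² and (u−u₂)² ≠ a₂², then the five vectors R₁₊, R₁₋, R₂₊, R₂₋, R_C are linearly independent in ℝ⁵ (so the Jacobian of the system possesses a full basis of eigenvectors). -/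
/-- Hyperbolicity away from resonance: if (u−u₁)² ≠ a₁² and (u−u₂)² ≠ a₂², the five
eigenvectors R₁₊, R₁₋, R₂₊, R₂₋, R_C of the barotropic SHTC system are linearly
independent in ℝ⁵. -/
theorem eigenvectors_linearly_independent
    (α₁ ρ₁ ρ₂ u₁ u₂ p₁ p₂ a₁ a₂ : ℝ)
    (hα₁ : 0 < α₁) (hα₁' : α₁ < 1) (hρ₁ : 0 < ρ₁) (hρ₂ : 0 < ρ₂)
    (ha₁ : 0 < a₁) (ha₂ : 0 < a₂)
    (α₂ ρ c₁ c₂ u : ℝ)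
    (hα₂ : α₂ = 1 - α₁) (hρ : ρ = α₁ * ρ₁ + α₂ * ρ₂)
    (hc₁ : c₁ = α₁ * ρ₁ / ρ) (hc₂ : c₂ = α₂ * ρ₂ / ρ)
    (hu : u = c₁ * u₁ + c₂ * u₂)
    (δ₁ δ₂ ε₁ ε₂ γ₁ γ₂ : ℝ)
    (hδ₁ : δ₁ = (p₁ - p₂) / ρ - (u - u₁) ^ 2 / α₁)
    (hδ₂ : δ₂ = (p₁ - p₂) / ρ + (u - u₂) ^ 2 / α₂)
    (hε₁ : ε₁ = ((u - u₁) ^ 2 - a₁ ^ 2) / ρ₁)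
    (hε₂ : ε₂ = ((u - u₂) ^ 2 - a₂ ^ 2) / ρ₂)
    (hγ₁ : γ₁ = (α₁ * (p₁ - p₂) - ρ * a₁ ^ 2) / (α₁ * ρ₁ * ρ))
    (hγ₂ : γ₂ = -((α₂ * (p₁ - p₂) + ρ * a₂ ^ 2) / (α₂ * ρ₂ * ρ)))
    (hres₁ : (u - u₁) ^ 2 ≠ a₁ ^ 2) (hres₂ : (u - u₂) ^ 2 ≠ a₂ ^ 2) :
    LinearIndependent ℝ
      ![![0, 1, 0, a₁ / ρ₁, 0],
        ![0, 1, 0, -(a₁ / ρ₁), 0],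
        ![0, 0, 1, 0, a₂ / ρ₂],
        ![0, 0, 1, 0, -(a₂ / ρ₂)],
        ![ε₁ * ε₂, δ₁ * ε₂, δ₂ * ε₁, (u - u₁) * ε₂ * γ₁, -((u - u₂) * ε₁ * γ₂)]] := by
  rw [show (![![0, 1, 0, a₁ / ρ₁, 0],
        ![0, 1, 0, -(a₁ / ρ₁), 0],
        ![0, 0, 1, 0, a₂ / ρ₂],
        ![0, 0, 1, 0, -(a₂ / ρ₂)],
        ![ε₁ * ε₂, δ₁ * ε₂, δ₂ * ε₁, (u - u₁) * ε₂ * γ₁, -((u - u₂) * ε₁ * γ₂)]] : Fin 5 → Fin 5 → ℝ)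
      = fun i ↦ (Matrix.of ![![0, 1, 0, a₁ / ρ₁, 0],
        ![0, 1, 0, -(a₁ / ρ₁), 0],
        ![0, 0, 1, 0, a₂ / ρ₂],
        ![0, 0, 1, 0, -(a₂ / ρ₂)],
        ![ε₁ * ε₂, δ₁ * ε₂, δ₂ * ε₁, (u - u₁) * ε₂ * γ₁, -((u - u₂) * ε₁ * γ₂)]]) i from rfl]
  refine (Matrix.linearIndependent_rows_iff_isUnit (K := ℝ)).2 ?_
  rw [Matrix.isUnit_iff_isUnit_det, isUnit_iff_ne_zero]
  have hd : (Matrix.of ![![0, 1, 0, a₁ / ρ₁, 0],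
        ![0, 1, 0, -(a₁ / ρ₁), 0],
        ![0, 0, 1, 0, a₂ / ρ₂],
        ![0, 0, 1, 0, -(a₂ / ρ₂)],
        ![ε₁ * ε₂, δ₁ * ε₂, δ₂ * ε₁, (u - u₁) * ε₂ * γ₁, -((u - u₂) * ε₁ * γ₂)]]).det
      = -(ε₁ * ε₂ * (2 * (a₁/ρ₁)) * (2 * (a₂/ρ₂))) := by
    simp [Matrix.det_succ_row_zero, Fin.sum_univ_succ, Fin.succAbove, Fin.castSucc, Fin.castAdd, Fin.castLE]
    ring
  rw [hd]
  have hε₁' : ε₁ ≠ 0 := by rw [hε₁]; exact div_ne_zero (sub_ne_zero.2 hres₁) hρ₁.ne'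
  have hε₂' : ε₂ ≠ 0 := by rw [hε₂]; exact div_ne_zero (sub_ne_zero.2 hres₂) hρ₂.ne'
  exact neg_ne_zero.2 (by positivity)
end

section
/- Vanishing criterion for the determinant of the mass-flux system: let α₁ ∈ (0,1), α₂ = 1−α₁, and ρ₁L, ρ₁R, ρ₂L, ρ₂R > 0. Then det := −½(α₁(1/ρ₁L − 1/ρ₁R)(1/ρ₂L² − 1/ρ₂R²) + α₂(1/ρ₁L² − 1/ρ₁R²)(1/ρ₂L − 1/ρ₂R)) = 0 if and only if ρ₁L = ρ₁R or ρ₂L = ρ₂R. In particular, if both phase densities jump across the shock, the 2×2 linear system for the squared partial mass fluxes is uniquely solvable. -/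
/-- Vanishing criterion for the determinant of the mass-flux system: det(M) = 0 iff one
of the phase densities does not jump; in particular if both phase densities jump the
system is uniquely solvable. -/
theorem mass_flux_determinant_vanishing
    (α₁ α₂ : ℝ) (hα₁ : 0 < α₁) (hα₁' : α₁ < 1) (hα₂ : α₂ = 1 - α₁)
    (ρ₁L ρ₁R ρ₂L ρ₂R : ℝ)
    (hρ₁L : 0 < ρ₁L) (hρ₁R : 0 < ρ₁R) (hρ₂L : 0 < ρ₂L) (hρ₂R : 0 < ρ₂R)
    (det : ℝ)
    (hdet : det = -(1 / 2) * (α₁ * (1 / ρ₁L - 1 / ρ₁R) * (1 / ρ₂L ^ 2 - 1 / ρ₂R ^ 2)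
        + α₂ * (1 / ρ₁L ^ 2 - 1 / ρ₁R ^ 2) * (1 / ρ₂L - 1 / ρ₂R))) :
    (det = 0 ↔ (ρ₁L = ρ₁R ∨ ρ₂L = ρ₂R))
    ∧ (ρ₁L ≠ ρ₁R → ρ₂L ≠ ρ₂R → det ≠ 0) := by
  have hα₂pos : 0 < α₂ := by rw [hα₂]; linarith
  have key : det = -(1/2) * ((1/ρ₁L - 1/ρ₁R) * (1/ρ₂L - 1/ρ₂R) *
      (α₁ * (1/ρ₂L + 1/ρ₂R) + α₂ * (1/ρ₁L + 1/ρ₁R))) := by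
    rw [hdet]; field_simp; ring
  have hS : 0 < α₁ * (1/ρ₂L + 1/ρ₂R) + α₂ * (1/ρ₁L + 1/ρ₁R) := by positivity
  have ha : (1/ρ₁L - 1/ρ₁R = 0) ↔ ρ₁L = ρ₁R := by
    rw [sub_eq_zero, div_eq_div_iff hρ₁L.ne' hρ₁R.ne']; constructor <;> intro h <;> linarith
  have hb : (1/ρ₂L - 1/ρ₂R = 0) ↔ ρ₂L = ρ₂R := by
    rw [sub_eq_zero, div_eq_div_iff hρ₂L.ne' hρ₂R.ne']; constructor <;> intro h <;> linarith
  have hiff : det = 0 ↔ (ρ₁L = ρ₁R ∨ ρ₂L = ρ₂R) := by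
    rw [key, mul_eq_zero, mul_eq_zero, mul_eq_zero, ha, hb]
    constructor
    · rintro (h | (h | h) | h)
      · norm_num at h
      · exact Or.inl h
      · exact Or.inr h
      · exact absurd h hS.ne'
    · rintro (h | h)
      · exact Or.inr (Or.inl (Or.inl h))
      · exact Or.inr (Or.inl (Or.inr h))
  exact ⟨hiff, fun h1 h2 hd => by rcases hiff.mp hd with h | h <;> [exact h1 h; exact h2 h]⟩
end

section
/- Both phase densities must jump across a shock (appendix lemma): let Ψ : (0,∞) → ℝ be strictly monotone increasing (e.g. differentiable with Ψ'(r) = a(r)²/r for a sound speed a(r) > 0). Let ρ⁻, ρ⁺ > 0, p⁻, p⁺ ∈ ℝ and Q ∈ ℝ satisfy the reduced jump conditions Q²(1/ρ⁻ − 1/ρ⁺) + (p⁻ − p⁺) = 0 and (Q²/2)(1/ρ⁻² − 1/ρ⁺²) − (Ψ(ρ⁻) − Ψ(ρ⁺)) = 0, as well as (Ψ(ρ⁻) − Ψ(ρ⁺)) − ½(p⁻ − p⁺)(1/ρ⁺ + 1/ρ⁻) = 0. Then ρ⁻ = ρ⁺. Consequently, if the density of the phase carrying the shock jumps, the density of the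 other phase must jump as well. -/
/-- Both phase densities must jump across a shock (appendix lemma): if Ψ is strictly
monotone increasing on (0,∞) and the reduced jump conditions hold, then ρ⁻ = ρ⁺. -/
theorem density_must_jump
    (Ψ : ℝ → ℝ) (hΨ : StrictMonoOn Ψ (Set.Ioi (0 : ℝ)))
    (ρm ρp : ℝ) (hρm : 0 < ρm) (hρp : 0 < ρp)
    (pm pp Q : ℝ)
    (h₁ : Q ^ 2 * (1 / ρm - 1 / ρp) + (pm - pp) = 0)
    (h₂ : Q ^ 2 / 2 * (1 / ρm ^ 2 - 1 / ρp ^ 2) - (Ψ ρm - Ψ ρp) = 0)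
    (h₃ : (Ψ ρm - Ψ ρp) - 1 / 2 * (pm - pp) * (1 / ρp + 1 / ρm) = 0) :
    ρm = ρp := by
  have key : Ψ ρm = Ψ ρp := by
    linear_combination (-(1:ℝ)/2) * h₂ + (1/2) * h₃ + ((1/ρp + 1/ρm)/4) * h₁
  exact hΨ.injOn hρm hρp key
end

section
/- Admissibility of case (iii) shock-inside-rarefaction: let a : (0,∞) → ℝ be differentiable with a(r) > 0, and assume the Lagrangian wave speed g(r) := r·a(r) is strictly increasing on (0,∞). Let Ψ : (0,∞) → ℝ be differentiable with Ψ'(r) = a(r)²/r. Fix ρ⁺ > 0, set Q² := (ρ⁺·a(ρ⁺))², and define f(ρ) := Ψ(ρ⁺) − Ψ(ρ) + (Q²/2)(1/ρ⁺² − 1/ρ²). Then f(ρ) < 0 for all 0 < ρ < ρ⁺; i.e. the entropy jump term ⟦Ψ + ½(u−S)²⟧ is strictly negative, so the configuration satisfies the energy (entropy) inequality. -/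
/-- Admissibility of the case (iii) shock-inside-rarefaction configuration: the entropy
jump term f(ρ) = Ψ(ρ⁺) − Ψ(ρ) + (Q²/2)(1/ρ⁺² − 1/ρ²) with Q² = (ρ⁺ a(ρ⁺))² is strictly
negative for 0 < ρ < ρ⁺, so the configuration satisfies the entropy inequality. -/
theorem shock_in_rarefaction_case_iii_admissible
    (a : ℝ → ℝ) (hadiff : ∀ r > (0 : ℝ), DifferentiableAt ℝ a r)
    (hapos : ∀ r > (0 : ℝ), 0 < a r)
    (hg : StrictMonoOn (fun r => r * a r) (Set.Ioi (0 : ℝ)))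
    (Ψ : ℝ → ℝ) (hΨ : ∀ r > (0 : ℝ), HasDerivAt Ψ (a r ^ 2 / r) r)
    (ρp : ℝ) (hρp : 0 < ρp)
    (Qsq : ℝ) (hQsq : Qsq = (ρp * a ρp) ^ 2)
    (f : ℝ → ℝ)
    (hf : ∀ ρ, f ρ = Ψ ρp - Ψ ρ + Qsq / 2 * (1 / ρp ^ 2 - 1 / ρ ^ 2)) :
    ∀ ρ, 0 < ρ → ρ < ρp → f ρ < 0 := by
  intro ρ hρ hρρp
  have hfe : f = fun x => Ψ ρp - Ψ x + Qsq / 2 * (1 / ρp ^ 2 - 1 / x ^ 2) :=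
    funext hf
  have hfρp : f ρp = 0 := by rw [hf]; ring
  -- derivative of f at any r > 0
  have hD : ∀ r : ℝ, 0 < r → HasDerivAt f ((Qsq - (r * a r) ^ 2) / r ^ 3) r := by
    intro r hr
    have hr2 : (r : ℝ) ^ 2 ≠ 0 := pow_ne_zero 2 hr.ne'
    have h2 : HasDerivAt (fun x : ℝ => 1 / x ^ 2)
        (-(((2 : ℕ) : ℝ) * r ^ (2 - 1)) / (r ^ 2) ^ 2) r := by
      simpa [one_div] using (hasDerivAt_pow 2 r).fun_inv hr2
    have h3 := ((h2.const_sub (1 / ρp ^ 2)).const_mul (Qsq / 2)).add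
      ((hΨ r hr).const_sub (Ψ ρp))
    rw [hfe]
    convert h3 using 1
    · rfl
    · rfl
    · funext x; simp only [Pi.add_apply]; ring
    · field_simp
      ring
  have key : StrictMonoOn f (Set.Icc ρ ρp) := by
    apply strictMonoOn_of_deriv_pos (convex_Icc _ _)
    · intro x hx
      exact ((hD x (hρ.trans_le hx.1)).differentiableAt.continuousAt).continuousWithinAt
    · intro r hr
      rw [interior_Icc] at hr
      have hr0 : 0 < r := hρ.trans hr.1
      rw [(hD r hr0).deriv]
      have hlt : r * a r < ρp * a ρp := hg (Set.mem_Ioi.mpr hr0) (Set.mem_Ioi.mpr hρp) hr.2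
      have h1 : 0 < r * a r := mul_pos hr0 (hapos r hr0)
      have : (r * a r) ^ 2 < Qsq := by
        rw [hQsq]
        exact pow_lt_pow_left₀ hlt h1.le (by norm_num)
      have h3 : (0:ℝ) < r ^ 3 := by positivity
      exact div_pos (sub_pos.mpr this) h3
  have := key (Set.mem_Icc.mpr ⟨le_refl ρ, hρρp.le⟩)
    (Set.mem_Icc.mpr ⟨hρρp.le, le_refl ρp⟩) hρρp
  rwa [hfρp] at this
end

section
/- Inadmissibility of case (iv) shock-inside-rarefaction: let a : (0,∞) → ℝ be differentiable with a(r) > 0, and assume the Lagrangian wave speed g(r) := r·a(r) is strictly increasing on (0,∞). Let Ψ : (0,∞) → ℝ be differentiable with Ψ'(r) = a(r)²/r. Fix ρ⁻ > 0, set Q² := (ρ⁻·a(ρ⁻))², and define f(ρ) := Ψ(ρ) − Ψ(ρ⁻) + (Q²/2)(1/ρ² − 1/ρ⁻²). Then f(ρ) > 0 for all ρ > ρ⁻; i.e. the entropy jump term ⟦Ψ + ½(u−S)²⟧ is strictly positive, so the configuration violates the energy (entropy) inequality. -/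
/-- Inadmissibility of the case (iv) shock-inside-rarefaction configuration: the entropy
jump term f(ρ) = Ψ(ρ) − Ψ(ρ⁻) + (Q²/2)(1/ρ² − 1/ρ⁻²) with Q² = (ρ⁻ a(ρ⁻))² is strictly
positive for ρ > ρ⁻, so the configuration violates the entropy inequality. -/
theorem shock_in_rarefaction_case_iv_inadmissible
    (a : ℝ → ℝ) (hadiff : ∀ r > (0 : ℝ), DifferentiableAt ℝ a r)
    (hapos : ∀ r > (0 : ℝ), 0 < a r)
    (hg : StrictMonoOn (fun r => r * a r) (Set.Ioi (0 : ℝ)))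
    (Ψ : ℝ → ℝ) (hΨ : ∀ r > (0 : ℝ), HasDerivAt Ψ (a r ^ 2 / r) r)
    (ρm : ℝ) (hρm : 0 < ρm)
    (Qsq : ℝ) (hQsq : Qsq = (ρm * a ρm) ^ 2)
    (f : ℝ → ℝ)
    (hf : ∀ ρ, f ρ = Ψ ρ - Ψ ρm + Qsq / 2 * (1 / ρ ^ 2 - 1 / ρm ^ 2)) :
    ∀ ρ, ρm < ρ → 0 < f ρ := by
  -- f has derivative a x ^2 / x - Qsq / x ^ 3 at x > 0
  have hfd : ∀ x > (0 : ℝ), HasDerivAt f (a x ^ 2 / x - Qsq / x ^ 3) x := by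
    intro x hx
    have hx0 : x ≠ 0 := ne_of_gt hx
    have h1 : HasDerivAt (fun ρ : ℝ => Ψ ρ - Ψ ρm + Qsq / 2 * (1 / ρ ^ 2 - 1 / ρm ^ 2))
        (a x ^ 2 / x - Qsq / x ^ 3) x := by
      have hinv : HasDerivAt (fun ρ : ℝ => 1 / ρ ^ 2 - 1 / ρm ^ 2)
          (-2 / x ^ 3) x := by
        have : HasDerivAt (fun ρ : ℝ => (ρ ^ 2)⁻¹)
            (-(2 * x ^ (2 - 1)) / (x ^ 2) ^ 2) x := by
          exact ((hasDerivAt_pow 2 x).inv (pow_ne_zero 2 hx0))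
        have h2 := this.sub_const (1 / ρm ^ 2)
        have heq : -(2 * x ^ (2 - 1)) / (x ^ 2) ^ 2 = -2 / x ^ 3 := by
          field_simp; ring
        rw [heq] at h2
        simpa [one_div] using h2
      have := ((hΨ x hx).sub_const (Ψ ρm)).add (hinv.const_mul (Qsq / 2))
      have heq : a x ^ 2 / x - Qsq / x ^ 3 = a x ^ 2 / x + Qsq / 2 * (-2 / x ^ 3) := by
        field_simp; ring
      rw [heq]; exact this
    exact h1.congr_of_eventuallyEq (Filter.Eventually.of_forall fun ρ => (hf ρ))
  -- derivative positive for x > ρm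
  have hpos : ∀ x ∈ Set.Ioi ρm, 0 < a x ^ 2 / x - Qsq / x ^ 3 := by
    intro x hx
    have hxm : ρm < x := hx
    have hx0 : 0 < x := lt_trans hρm hxm
    have hgx : ρm * a ρm < x * a x := hg (Set.mem_Ioi.mpr hρm) (Set.mem_Ioi.mpr hx0) hxm
    have hga : 0 < ρm * a ρm := mul_pos hρm (hapos ρm hρm)
    have hsq : (ρm * a ρm) ^ 2 < (x * a x) ^ 2 := by
      apply pow_lt_pow_left₀ hgx (le_of_lt hga) (by norm_num)
    have : Qsq < (x * a x) ^ 2 := by rw [hQsq]; exact hsq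
    have hx3 : (0 : ℝ) < x ^ 3 := by positivity
    rw [sub_pos, div_lt_div_iff₀ hx3 hx0]
    nlinarith [this]
  have hmono : StrictMonoOn f (Set.Ici ρm) := by
    apply StrictMonoOn.mono (s := Set.Ici ρm) ?_ le_rfl
    apply strictMonoOn_of_hasDerivWithinAt_pos (convex_Ici ρm)
      (fun x hx => ((hfd x (lt_of_lt_of_le hρm hx)).continuousAt.continuousWithinAt))
    · intro x hx
      rw [interior_Ici] at hx
      exact ((hfd x (lt_trans hρm hx)).hasDerivWithinAt)
    · intro x hx
      rw [interior_Ici] at hx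
      exact hpos x hx
  intro ρ hρ
  have h0 : f ρm = 0 := by rw [hf]; ring
  have := hmono (Set.self_mem_Ici) (Set.mem_Ici.mpr (le_of_lt hρ)) hρ
  linarith
end

section
/- Reduction of the entropy (total energy) dissipation across a discontinuity: let α₁ ∈ (0,1), α₂ = 1−α₁, let ρᵢL, ρᵢR > 0, uᵢL, uᵢR, pᵢL, pᵢR, eᵢL, eᵢR (i = 1,2) and S be real numbers, set hᵢX := eᵢX + pᵢX/ρᵢX and assume continuity of the partial mass fluxes ρᵢL(uᵢL − S) = ρᵢR(uᵢR − S) =: −Qᵢ for i = 1,2 and the momentum jump condition −α₁Q₁⟦u₁⟧ + α₁⟦p₁⟧ − α₂Q₂⟦u₂⟧ + α₂⟦p₂⟧ = 0. Then Σᵢ₌₁² ( −S·⟦αᵢρᵢ(eᵢ + ½uᵢ²)⟧ + ⟦αᵢρᵢuᵢ(hᵢ + ½uᵢ²)⟧ ) = −Σᵢ₌₁² αᵢQᵢ·⟦hᵢ + ½(uᵢ − S)²⟧. -/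
/-- Reduction of the entropy (total energy) dissipation across a discontinuity: given
continuity of the partial mass fluxes and the momentum jump condition, the total energy
dissipation equals −Σᵢ αᵢ Qᵢ ⟦hᵢ + ½(uᵢ − S)²⟧. -/
theorem entropy_dissipation_reduction
    (α₁ α₂ : ℝ) (hα₁ : 0 < α₁) (hα₁' : α₁ < 1) (hα₂ : α₂ = 1 - α₁)
    (ρ₁L ρ₁R ρ₂L ρ₂R : ℝ)
    (hρ₁L : 0 < ρ₁L) (hρ₁R : 0 < ρ₁R) (hρ₂L : 0 < ρ₂L) (hρ₂R : 0 < ρ₂R)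
    (u₁L u₁R u₂L u₂R p₁L p₁R p₂L p₂R e₁L e₁R e₂L e₂R S : ℝ)
    (h₁L h₁R h₂L h₂R : ℝ)
    (hh₁L : h₁L = e₁L + p₁L / ρ₁L) (hh₁R : h₁R = e₁R + p₁R / ρ₁R)
    (hh₂L : h₂L = e₂L + p₂L / ρ₂L) (hh₂R : h₂R = e₂R + p₂R / ρ₂R)
    (Q₁ Q₂ : ℝ)
    (hQ₁ : Q₁ = -(ρ₁L * (u₁L - S))) (hQ₁' : ρ₁L * (u₁L - S) = ρ₁R * (u₁R - S))
    (hQ₂ : Q₂ = -(ρ₂L * (u₂L - S))) (hQ₂' : ρ₂L * (u₂L - S) = ρ₂R * (u₂R - S))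
    (hmom : -(α₁ * Q₁) * (u₁L - u₁R) + α₁ * (p₁L - p₁R)
        - α₂ * Q₂ * (u₂L - u₂R) + α₂ * (p₂L - p₂R) = 0) :
    (-S * (α₁ * ρ₁L * (e₁L + 1 / 2 * u₁L ^ 2) - α₁ * ρ₁R * (e₁R + 1 / 2 * u₁R ^ 2))
        + (α₁ * ρ₁L * u₁L * (h₁L + 1 / 2 * u₁L ^ 2) - α₁ * ρ₁R * u₁R * (h₁R + 1 / 2 * u₁R ^ 2)))
    + (-S * (α₂ * ρ₂L * (e₂L + 1 / 2 * u₂L ^ 2) - α₂ * ρ₂R * (e₂R + 1 / 2 * u₂R ^ 2))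
        + (α₂ * ρ₂L * u₂L * (h₂L + 1 / 2 * u₂L ^ 2) - α₂ * ρ₂R * u₂R * (h₂R + 1 / 2 * u₂R ^ 2)))
    = -(α₁ * Q₁ * ((h₁L + 1 / 2 * (u₁L - S) ^ 2) - (h₁R + 1 / 2 * (u₁R - S) ^ 2))
        + α₂ * Q₂ * ((h₂L + 1 / 2 * (u₂L - S) ^ 2) - (h₂R + 1 / 2 * (u₂R - S) ^ 2))) := by
  subst hh₁L hh₁R hh₂L hh₂R hQ₁ hQ₂ hα₂
  obtain ⟨c₁L, rfl⟩ : ∃ c, p₁L = ρ₁L * c := ⟨p₁L / ρ₁L, by field_simp⟩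
  obtain ⟨c₁R, rfl⟩ : ∃ c, p₁R = ρ₁R * c := ⟨p₁R / ρ₁R, by field_simp⟩
  obtain ⟨c₂L, rfl⟩ : ∃ c, p₂L = ρ₂L * c := ⟨p₂L / ρ₂L, by field_simp⟩
  obtain ⟨c₂R, rfl⟩ : ∃ c, p₂R = ρ₂R * c := ⟨p₂R / ρ₂R, by field_simp⟩
  rw [mul_div_cancel_left₀ _ hρ₁L.ne', mul_div_cancel_left₀ _ hρ₁R.ne',
      mul_div_cancel_left₀ _ hρ₂L.ne', mul_div_cancel_left₀ _ hρ₂R.ne']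
  linear_combination S * hmom + α₁ * (e₁R + c₁R + u₁R ^ 2 / 2) * hQ₁'
    + (1 - α₁) * (e₂R + c₂R + u₂R ^ 2 / 2) * hQ₂'
end
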